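/- arXiv:math/0607163 — 2 statements merged into one kernel-verified Lean document; each statement's English description precedes it below -/
import Mathlib

section
/- For integers n ≥ 0 and h ≥ 0, the number of Dyck paths from (0,0) to (2n,0) that stay between the lines y = 0 and y = h equals (1/(n+1))·binomial(2n,n) minus the sum over k ≥ 1 of (binomial(2n, n - k(h+2) - 1) - 2·binomial(2n, n - k(h+2)) + binomial(2n, n - k(h+2) + 1)). -/
open Finset

/-- The height of the lattice path with step sequence `s` (true = up-step (1,1),
false = down-step (1,-1)) after `i` steps. -/
def pathHt {m : ℕ} (s : Fin m → Bool) (i : ℕ) : ℤ :=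
  ∑ j ∈ Finset.univ.filter (fun j : Fin m => (j : ℕ) < i), (if s j then (1 : ℤ) else -1)

/-- Binomial coefficient `n` choose `j` for an integer lower index `j`,
equal to `0` when `j < 0` or `j > n`. -/
def intChoose (n : ℕ) (j : ℤ) : ℤ :=
  if 0 ≤ j then (n.choose j.toNat : ℤ) else 0

section Aux

lemma intChoose_neg (N : ℕ) {j : ℤ} (hj : j < 0) : intChoose N j = 0 := by
  simp [intChoose, not_le.mpr hj]

lemma intChoose_big (N : ℕ) {j : ℤ} (hj : (N:ℤ) < j) : intChoose N j = 0 := by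
  have h0 : 0 ≤ j := le_of_lt (lt_of_le_of_lt (Int.ofNat_nonneg N) hj)
  have : N < j.toNat := by omega
  simp [intChoose, h0, Nat.choose_eq_zero_of_lt this]

lemma intChoose_pascal (N : ℕ) (j : ℤ) :
    intChoose (N+1) j = intChoose N (j-1) + intChoose N j := by
  rcases lt_trichotomy j 0 with h | h | h
  · rw [intChoose_neg _ h, intChoose_neg _ (by omega), intChoose_neg _ h]; ring
  · subst h; simp [intChoose]
  · have h1 : (0:ℤ) ≤ j := le_of_lt h
    have h2 : (0:ℤ) ≤ j - 1 := by omega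
    have h3 : j.toNat = (j-1).toNat + 1 := by omega
    simp only [intChoose, if_pos h1, if_pos h2, h3]
    rw [Nat.choose_succ_succ]
    push_cast; ring

lemma intChoose_symm (N : ℕ) (j : ℤ) : intChoose N j = intChoose N ((N:ℤ) - j) := by
  rcases lt_trichotomy j 0 with h | h | h
  · rw [intChoose_neg _ h, intChoose_big _ (by omega)]
  · subst h; simp [intChoose]
  · rcases le_or_gt j N with h2 | h2
    · have h3 : 0 ≤ (N:ℤ) - j := by omega
      simp only [intChoose, if_pos (le_of_lt h), if_pos h3]
      have : ((N:ℤ) - j).toNat = N - j.toNat := by omega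
      rw [this, Nat.choose_symm (by omega)]
    · rw [intChoose_big _ h2, intChoose_neg _ (by omega)]

/-- Number of unconstrained ±1 paths of length `t` with total displacement `b`. -/
def freeCt : ℕ → ℤ → ℤ
  | 0, b => if b = 0 then 1 else 0
  | (t+1), b => freeCt t (b-1) + freeCt t (b+1)

lemma freeCt_zero (b : ℤ) : freeCt 0 b = if b = 0 then 1 else 0 := rfl

lemma freeCt_succ (t : ℕ) (b : ℤ) : freeCt (t+1) b = freeCt t (b-1) + freeCt t (b+1) := rfl

lemma freeCt_eq_intChoose : ∀ (t : ℕ) (j : ℤ), freeCt t (2*j - t) = intChoose t j := by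
  intro t
  induction t with
  | zero =>
    intro j
    rcases lt_trichotomy j 0 with h | h | h
    · rw [intChoose_neg _ h]; simp [freeCt]; omega
    · subst h; simp [freeCt, intChoose]
    · rw [intChoose_big _ (by exact_mod_cast h)]
      have : 2*j - (0:ℕ) ≠ 0 := by omega
      simp only [freeCt, if_neg this]
  | succ t ih =>
    intro j
    show freeCt t _ + freeCt t _ = _
    rw [intChoose_pascal]
    have e1 : 2*j - (t+1:ℕ) - 1 = 2*(j-1) - t := by push_cast; ring
    have e2 : 2*j - (t+1:ℕ) + 1 = 2*j - t := by push_cast; ring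
    rw [e1, e2, ih, ih]

lemma freeCt_neg : ∀ (t : ℕ) (b : ℤ), freeCt t (-b) = freeCt t b := by
  intro t
  induction t with
  | zero =>
    intro b
    simp only [freeCt, neg_eq_zero]
  | succ t ih =>
    intro b
    show freeCt t _ + freeCt t _ = freeCt t _ + freeCt t _
    have e1 : -b - 1 = -(b+1) := by ring
    have e2 : -b + 1 = -(b-1) := by ring
    rw [e1, e2, ih, ih]; ring

lemma freeCt_abs : ∀ (t : ℕ) (b : ℤ), (t:ℤ) < |b| → freeCt t b = 0 := by
  intro t
  induction t with
  | zero =>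
    intro b hb
    have hb0 : b ≠ 0 := by rcases abs_cases b with ⟨h1,h2⟩|⟨h1,h2⟩ <;> omega
    simp only [freeCt, if_neg hb0]
  | succ t ih =>
    intro b hb
    show freeCt t (b-1) + freeCt t (b+1) = 0
    have h1 : (t:ℤ) < |b - 1| := by
      rcases abs_cases b with ⟨e1,e2⟩|⟨e1,e2⟩ <;>
        rcases abs_cases (b-1) with ⟨f1,f2⟩|⟨f1,f2⟩ <;> push_cast at hb <;> omega
    have h2 : (t:ℤ) < |b + 1| := by
      rcases abs_cases b with ⟨e1,e2⟩|⟨e1,e2⟩ <;>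
        rcases abs_cases (b+1) with ⟨f1,f2⟩|⟨f1,f2⟩ <;> push_cast at hb <;> omega
    rw [ih _ h1, ih _ h2]; ring

/-- One summand of the reflection sum. -/
def gterm (h t : ℕ) (a k : ℤ) : ℤ :=
  freeCt t (2*k*((h:ℤ)+2) - a) - freeCt t (2*k*((h:ℤ)+2) - 2 - a)

/-- The reflection sum counting paths of length `t` from `0` to `a` in the strip `[0,h]`. -/
noncomputable def G (h t : ℕ) (a : ℤ) : ℤ := ∑ k ∈ Finset.Icc (-(t:ℤ)-1) ((t:ℤ)+1), gterm h t a k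

lemma freeCt_vanish (h t : ℕ) {b k : ℤ} (hb1 : -1 ≤ b) (hb2 : b ≤ (h:ℤ)+3)
    (hk : (t:ℤ)+1 ≤ |k|) : freeCt t (2*k*((h:ℤ)+2) - b) = 0 := by
  apply freeCt_abs
  have habs : |2*k*((h:ℤ)+2) - b| ≥ |2*k*((h:ℤ)+2)| - |b| := abs_sub_abs_le_abs_sub _ _
  have h2 : |2*k*((h:ℤ)+2)| = |k| * (2*(h:ℤ)+4) := by
    rw [show 2*k*((h:ℤ)+2) = k * (2*(h:ℤ)+4) by ring, abs_mul,
      abs_of_nonneg (show (0:ℤ) ≤ 2*(h:ℤ)+4 by positivity)]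
  have h3 : |b| ≤ (h:ℤ)+3 := by rcases abs_cases b with ⟨e1,e2⟩|⟨e1,e2⟩ <;> omega
  have hk0 : (0:ℤ) ≤ |k| := abs_nonneg k
  nlinarith [abs_nonneg (2*k*((h:ℤ)+2) - b)]

lemma gterm_vanish (h t : ℕ) {a k : ℤ} (ha1 : -1 ≤ a) (ha2 : a ≤ (h:ℤ)+1)
    (hk : (t:ℤ)+1 ≤ |k|) : gterm h t a k = 0 := by
  unfold gterm
  rw [freeCt_vanish h t ha1 (by omega) hk,
    show 2*k*((h:ℤ)+2) - 2 - a = 2*k*((h:ℤ)+2) - (a+2) by ring,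
    freeCt_vanish h t (by omega) (by omega) hk]
  ring

lemma G_eq_sum (h t : ℕ) {a : ℤ} (ha1 : -1 ≤ a) (ha2 : a ≤ (h:ℤ)+1) {K : ℤ}
    (hK : (t:ℤ)+1 ≤ K) : G h t a = ∑ k ∈ Finset.Icc (-K) K, gterm h t a k := by
  apply Finset.sum_subset
  · intro x hx
    simp only [Finset.mem_Icc] at *
    omega
  · intro x hx hx2
    simp only [Finset.mem_Icc, not_and_or, not_le] at hx hx2
    apply gterm_vanish h t ha1 ha2
    rcases abs_cases x with ⟨e1,e2⟩|⟨e1,e2⟩ <;> omega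

lemma G_pascal (h t : ℕ) {a : ℤ} (ha1 : 0 ≤ a) (ha2 : a ≤ (h:ℤ)) :
    G h (t+1) a = G h t (a-1) + G h t (a+1) := by
  have key : ∀ k : ℤ, gterm h (t+1) a k = gterm h t (a-1) k + gterm h t (a+1) k := by
    intro k
    unfold gterm
    rw [freeCt_succ, freeCt_succ]
    have e1 : 2*k*((h:ℤ)+2) - a - 1 = 2*k*((h:ℤ)+2) - (a+1) := by ring
    have e2 : 2*k*((h:ℤ)+2) - a + 1 = 2*k*((h:ℤ)+2) - (a-1) := by ring
    have e3 : 2*k*((h:ℤ)+2) - 2 - a - 1 = 2*k*((h:ℤ)+2) - 2 - (a+1) := by ring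
    have e4 : 2*k*((h:ℤ)+2) - 2 - a + 1 = 2*k*((h:ℤ)+2) - 2 - (a-1) := by ring
    rw [e1, e2, e3, e4]; ring
  rw [G_eq_sum h t (a := a-1) (by omega) (by omega) (K := (t:ℤ)+2) (by omega),
    G_eq_sum h t (a := a+1) (by omega) (by omega) (K := (t:ℤ)+2) (by omega)]
  unfold G
  rw [← Finset.sum_add_distrib]
  refine Finset.sum_congr (by congr 1 <;> push_cast <;> ring) ?_
  intro k _
  exact key k

lemma sum_neg_reindex (L U : ℤ) (hLU : L = -U) (f : ℤ → ℤ) :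
    ∑ k ∈ Finset.Icc L U, f (-k) = ∑ k ∈ Finset.Icc L U, f k := by
  refine Finset.sum_nbij' (fun k => -k) (fun k => -k) ?_ ?_ ?_ ?_ ?_
  · intro a ha; simp only [Finset.mem_Icc] at *; omega
  · intro a ha; simp only [Finset.mem_Icc] at *; omega
  · intro a _; ring
  · intro a _; ring
  · intro a _; rfl

lemma G_bot (h t : ℕ) : G h t (-1) = 0 := by
  unfold G gterm
  have key : ∀ k : ℤ, freeCt t (2*k*((h:ℤ)+2) - 2 - (-1)) =
      freeCt t (2*(-k)*((h:ℤ)+2) - (-1)) := by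
    intro k
    rw [show 2*(-k)*((h:ℤ)+2) - (-1) = -(2*k*((h:ℤ)+2) - 2 - (-1)) by ring, freeCt_neg]
  rw [Finset.sum_sub_distrib]
  rw [Finset.sum_congr rfl (fun k _ => key k)]
  rw [sum_neg_reindex (-(t:ℤ)-1) ((t:ℤ)+1) (by ring) (fun k => freeCt t (2*k*((h:ℤ)+2) - (-1)))]
  ring

lemma sum_one_sub (t : ℕ) (f : ℤ → ℤ) (h0 : ∀ k, (t:ℤ)+1 ≤ |k| → f k = 0) :
    ∑ k ∈ Finset.Icc (-(t:ℤ)-1) ((t:ℤ)+1), f (1-k)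
      = ∑ k ∈ Finset.Icc (-(t:ℤ)-1) ((t:ℤ)+1), f k := by
  have h0' : ∀ k : ℤ, k < -(t:ℤ) - 1 ∨ (t:ℤ) + 1 < k ∨ k = -(t:ℤ)-1 ∨ k = (t:ℤ)+1 → f k = 0 := by
    intro k hk
    apply h0
    rcases abs_cases k with ⟨e1,e2⟩|⟨e1,e2⟩ <;> omega
  have step1 : ∑ k ∈ Finset.Icc (-(t:ℤ)-1) ((t:ℤ)+1), f (1-k)
      = ∑ k ∈ Finset.Icc (-(t:ℤ)) ((t:ℤ)+2), f k := by
    refine Finset.sum_nbij' (fun k => 1-k) (fun k => 1-k) ?_ ?_ ?_ ?_ ?_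
    · intro a ha; simp only [Finset.mem_Icc] at *; omega
    · intro a ha; simp only [Finset.mem_Icc] at *; omega
    · intro a _; ring
    · intro a _; ring
    · intro a _; rfl
  rw [step1]
  rw [Finset.sum_subset (show Finset.Icc (-(t:ℤ)) ((t:ℤ)+2) ⊆ Finset.Icc (-(t:ℤ)-2) ((t:ℤ)+2) by
      intro x hx; simp only [Finset.mem_Icc] at *; omega)
    (by intro x hx hx2; simp only [Finset.mem_Icc, not_and_or, not_le] at hx hx2; apply h0'; omega)]
  rw [Finset.sum_subset (show Finset.Icc (-(t:ℤ)-1) ((t:ℤ)+1) ⊆ Finset.Icc (-(t:ℤ)-2) ((t:ℤ)+2) by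
      intro x hx; simp only [Finset.mem_Icc] at *; omega)
    (by intro x hx hx2; simp only [Finset.mem_Icc, not_and_or, not_le] at hx hx2; apply h0'; omega)]

lemma G_top (h t : ℕ) : G h t ((h:ℤ)+1) = 0 := by
  unfold G gterm
  have key : ∀ k : ℤ, freeCt t (2*k*((h:ℤ)+2) - 2 - ((h:ℤ)+1)) =
      freeCt t (2*(1-k)*((h:ℤ)+2) - ((h:ℤ)+1)) := by
    intro k
    rw [show 2*(1-k)*((h:ℤ)+2) - ((h:ℤ)+1) = -(2*k*((h:ℤ)+2) - 2 - ((h:ℤ)+1)) by ring, freeCt_neg]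
  rw [Finset.sum_sub_distrib]
  rw [Finset.sum_congr rfl (fun k _ => key k)]
  rw [sum_one_sub t (fun k => freeCt t (2*k*((h:ℤ)+2) - ((h:ℤ)+1))) ?_]
  · ring
  · intro k hk
    exact freeCt_vanish h t (by omega) (by omega) hk

lemma G_base (h : ℕ) {a : ℤ} (ha1 : -1 ≤ a) (ha2 : a ≤ (h:ℤ)+1) :
    G h 0 a = if a = 0 then 1 else 0 := by
  unfold G gterm
  have e : Finset.Icc (-((0:ℕ):ℤ)-1) (((0:ℕ):ℤ)+1) = {-1, 0, 1} := by
    norm_num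
    rfl
  rw [e, Finset.sum_insert (by decide), Finset.sum_insert (by decide), Finset.sum_singleton]
  simp only [freeCt_zero]
  split_ifs <;> omega

lemma pathHt_ite {m : ℕ} (s : Fin m → Bool) (i : ℕ) :
    pathHt s i = ∑ j : Fin m, (if (j:ℕ) < i then (if s j then (1:ℤ) else -1) else 0) := by
  rw [pathHt, Finset.sum_filter]

lemma pathHt_snoc {t : ℕ} (q : Fin t → Bool) (x : Bool) (i : ℕ) :
    pathHt (Fin.snoc q x) i = pathHt q i + (if t < i then (if x then (1:ℤ) else -1) else 0) := by
  rw [pathHt_ite, pathHt_ite, Fin.sum_univ_castSucc]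
  congr 1
  · apply Finset.sum_congr rfl
    intro j _
    simp [Fin.snoc_castSucc]
  · simp [Fin.snoc_last, Fin.val_last]

lemma pathHt_stable {t : ℕ} (q : Fin t → Bool) {i : ℕ} (hi : t ≤ i) :
    pathHt q i = pathHt q t := by
  rw [pathHt_ite, pathHt_ite]
  apply Finset.sum_congr rfl
  intro j _
  have : (j:ℕ) < t := j.isLt
  rw [if_pos (by omega), if_pos this]

lemma pathHt_zero' {m : ℕ} (s : Fin m → Bool) : pathHt s 0 = 0 := by
  rw [pathHt_ite]; simp

/-- Paths of length `t` from `0` to `b` staying in the strip `[0,h]`. -/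
def strip (h t : ℕ) (b : ℤ) : Finset (Fin t → Bool) :=
  Finset.univ.filter (fun s => pathHt s t = b ∧ ∀ i ≤ t, 0 ≤ pathHt s i ∧ pathHt s i ≤ (h:ℤ))

lemma snoc_injective {t : ℕ} : Function.Injective
    (fun p : (Fin t → Bool) × Bool => (Fin.snoc p.1 p.2 : Fin (t+1) → Bool)) := by
  intro ⟨q, x⟩ ⟨q', x'⟩ hqq
  simp only at hqq
  have h1 : x = x' := by
    have := congrFun hqq (Fin.last t)
    simpa [Fin.snoc_last] using this
  have h2 : q = q' := by
    funext j
    have := congrFun hqq (Fin.castSucc j)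
    simpa [Fin.snoc_castSucc] using this
  exact Prod.ext h2 h1

lemma strip_succ (h t : ℕ) {b : ℤ} (hb1 : 0 ≤ b) (hb2 : b ≤ (h:ℤ)) :
    (strip h (t+1) b).card = (strip h t (b-1)).card + (strip h t (b+1)).card := by
  have hset : strip h (t+1) b =
      ((strip h t (b-1) ×ˢ ({true} : Finset Bool)) ∪ (strip h t (b+1) ×ˢ ({false} : Finset Bool))).image
        (fun p : (Fin t → Bool) × Bool => (Fin.snoc p.1 p.2 : Fin (t+1) → Bool)) := by
    ext s
    simp only [strip, Finset.mem_filter, Finset.mem_univ, true_and, Finset.mem_image,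
      Finset.mem_union, Finset.mem_product, Finset.mem_singleton]
    constructor
    · rintro ⟨hend, hrange⟩
      refine ⟨(Fin.init s, s (Fin.last t)), ?_, Fin.snoc_init_self s⟩
      have hs : s = Fin.snoc (Fin.init s) (s (Fin.last t)) := (Fin.snoc_init_self s).symm
      have hq : ∀ i ≤ t, 0 ≤ pathHt (Fin.init s) i ∧ pathHt (Fin.init s) i ≤ (h:ℤ) := by
        intro i hi
        have := hrange i (by omega)
        rwa [hs, pathHt_snoc, if_neg (by omega), add_zero] at this
      have hqend : pathHt s (t+1) = pathHt (Fin.init s) t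
          + (if s (Fin.last t) then (1:ℤ) else -1) := by
        conv_lhs => rw [hs]
        rw [pathHt_snoc, if_pos (by omega), pathHt_stable _ (by omega)]
      cases hx : s (Fin.last t)
      · right
        refine ⟨⟨?_, hq⟩, rfl⟩
        dsimp only
        rw [hx] at hqend
        norm_num at hqend
        omega
      · left
        refine ⟨⟨?_, hq⟩, rfl⟩
        dsimp only
        rw [hx] at hqend
        norm_num at hqend
        omega
    · rintro ⟨⟨q, x⟩, hp, rfl⟩
      have hrec : ∀ (c : ℤ), pathHt q t = c ∧ (∀ i ≤ t, 0 ≤ pathHt q i ∧ pathHt q i ≤ (h:ℤ)) →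
          c + (if x then (1:ℤ) else -1) = b →
          pathHt (Fin.snoc q x) (t+1) = b ∧
            ∀ i ≤ t+1, 0 ≤ pathHt (Fin.snoc q x) i ∧ pathHt (Fin.snoc q x) i ≤ (h:ℤ) := by
        rintro c ⟨hend, hrange⟩ hc
        constructor
        · rw [pathHt_snoc, if_pos (by omega), pathHt_stable _ (by omega), hend, hc]
        · intro i hi
          rcases Nat.lt_or_ge i (t+1) with hi2 | hi2
          · rw [pathHt_snoc, if_neg (by omega), add_zero]
            exact hrange i (by omega)
          · have : i = t + 1 := by omega
            subst this
            rw [pathHt_snoc, if_pos (by omega), pathHt_stable _ (by omega), hend, hc]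
            exact ⟨hb1, hb2⟩
      rcases hp with ⟨⟨h1, h2⟩, hx⟩ | ⟨⟨h1, h2⟩, hx⟩ <;> subst hx
      · exact hrec (b-1) ⟨h1, h2⟩ (by norm_num)
      · exact hrec (b+1) ⟨h1, h2⟩ (by norm_num)
  rw [hset, Finset.card_image_of_injective _ snoc_injective,
    Finset.card_union_of_disjoint, Finset.card_product, Finset.card_product]
  · simp
  · rw [Finset.disjoint_left]
    rintro ⟨q, x⟩ hp hp2
    simp only [Finset.mem_product, Finset.mem_singleton] at hp hp2
    rw [hp.2] at hp2
    exact Bool.noConfusion hp2.2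

lemma strip_eq_G (h : ℕ) : ∀ t : ℕ, ∀ b : ℤ, -1 ≤ b → b ≤ (h:ℤ)+1 →
    ((strip h t b).card : ℤ) = G h t b := by
  intro t
  induction t with
  | zero =>
    intro b hb1 hb2
    rw [G_base h hb1 hb2]
    by_cases hb : b = 0
    · subst hb
      rw [if_pos rfl]
      have : strip h 0 (0:ℤ) = Finset.univ := by
        apply Finset.filter_true_of_mem
        intro s _
        refine ⟨pathHt_zero' s, ?_⟩
        intro i hi
        interval_cases i
        rw [pathHt_zero']
        exact ⟨le_refl 0, by positivity⟩
      rw [this]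
      simp
    · rw [if_neg hb]
      have : strip h 0 b = ∅ := by
        apply Finset.filter_false_of_mem
        intro s _
        rw [pathHt_zero']
        rintro ⟨h1, -⟩
        exact hb h1.symm
      rw [this]
      simp
  | succ t ih =>
    intro b hb1 hb2
    rcases eq_or_lt_of_le hb1 with hb | hb
    · rw [← hb, G_bot]
      have : strip h (t+1) (-1:ℤ) = ∅ := by
        apply Finset.filter_false_of_mem
        intro s _
        rintro ⟨h1, h2⟩
        have := (h2 (t+1) (le_refl _)).1
        omega
      rw [this]
      simp
    · rcases eq_or_lt_of_le hb2 with hb' | hb'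
      · rw [hb', G_top]
        have : strip h (t+1) ((h:ℤ)+1) = ∅ := by
          apply Finset.filter_false_of_mem
          intro s _
          rintro ⟨h1, h2⟩
          have := (h2 (t+1) (le_refl _)).2
          omega
        rw [this]
        simp
      · have hb1' : 0 ≤ b := by omega
        have hb2' : b ≤ (h:ℤ) := by omega
        rw [strip_succ h t hb1' hb2', G_pascal h t hb1' hb2']
        push_cast
        rw [ih (b-1) (by omega) (by omega), ih (b+1) (by omega) (by omega)]

lemma catalan_part (n : ℕ) :
    (((2*n).choose n / (n+1) : ℕ) : ℤ)
      = intChoose (2*n) (n:ℤ) - intChoose (2*n) ((n:ℤ)-1) := by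
  have key : (2*n).choose (n+1) * (n+1) = (2*n).choose n * n := by
    have := Nat.choose_succ_right_eq (2*n) n
    rwa [show 2*n - n = n by omega] at this
  have hle : (2*n).choose (n+1) ≤ (2*n).choose n := by
    have := Nat.choose_le_middle (n+1) (2*n)
    rwa [show 2*n/2 = n by omega] at this
  have hdiv : (2*n).choose n / (n+1) = (2*n).choose n - (2*n).choose (n+1) := by
    apply Nat.div_eq_of_eq_mul_left (by omega)
    rw [Nat.sub_mul, key]
    have : (2*n).choose n * (n+1) = (2*n).choose n * n + (2*n).choose n := by ring
    omega
  rw [hdiv, intChoose_symm (2*n) ((n:ℤ)-1),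
    show ((2*n:ℕ):ℤ) - ((n:ℤ)-1) = ((n+1:ℕ):ℤ) by push_cast; ring]
  simp only [intChoose, if_pos (Int.ofNat_nonneg n), if_pos (Int.ofNat_nonneg (n+1)),
    Int.toNat_natCast]
  push_cast [Nat.cast_sub hle]
  norm_num

lemma Icc_split (f : ℤ → ℤ) {a b c : ℤ} (hab : a ≤ b) (hbc : b ≤ c) :
    ∑ k ∈ Finset.Icc a c, f k
      = ∑ k ∈ Finset.Icc a b, f k + ∑ k ∈ Finset.Icc (b+1) c, f k := by
  rw [← Finset.sum_union (by
    rw [Finset.disjoint_left]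
    intro x hx hx2
    simp only [Finset.mem_Icc] at hx hx2
    omega)]
  congr 1
  ext x
  simp only [Finset.mem_union, Finset.mem_Icc]
  omega

lemma sum_Icc_neg (a b : ℤ) (f : ℤ → ℤ) :
    ∑ k ∈ Finset.Icc a b, f (-k) = ∑ k ∈ Finset.Icc (-b) (-a), f k := by
  refine Finset.sum_nbij' (fun k => -k) (fun k => -k) ?_ ?_ ?_ ?_ ?_
  · intro x hx; simp only [Finset.mem_Icc] at *; omega
  · intro x hx; simp only [Finset.mem_Icc] at *; omega
  · intro x _; ring
  · intro x _; ring
  · intro x _; rfl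

end Aux

/-- The number of Dyck paths from `(0,0)` to `(2n,0)` staying between the lines
`y = 0` and `y = h`. -/
theorem bounded_dyck_paths_card (n h : ℕ) :
    ((Finset.univ.filter (fun s : Fin (2 * n) → Bool =>
        pathHt s (2 * n) = 0 ∧
        ∀ i ≤ 2 * n, 0 ≤ pathHt s i ∧ pathHt s i ≤ (h : ℤ))).card : ℤ)
      = ((2 * n).choose n / (n + 1) : ℕ)
        - ∑' k : ℕ,
            (intChoose (2 * n) ((n : ℤ) - (k + 1) * (h + 2) - 1)
              - 2 * intChoose (2 * n) ((n : ℤ) - (k + 1) * (h + 2))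
              + intChoose (2 * n) ((n : ℤ) - (k + 1) * (h + 2) + 1)) := by
  -- abbreviations
  set m : ℤ := (h:ℤ) + 2 with hm
  set f : ℤ → ℤ := fun k =>
    intChoose (2*n) ((n:ℤ) + k*m) - intChoose (2*n) ((n:ℤ) + k*m - 1) with hf
  set g : ℤ → ℤ := fun k =>
    intChoose (2*n) ((n:ℤ) - k*m - 1) - 2 * intChoose (2*n) ((n:ℤ) - k*m)
      + intChoose (2*n) ((n:ℤ) - k*m + 1) with hg
  have hstrip : ((strip h (2*n) 0).card : ℤ) = G h (2*n) 0 :=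
    strip_eq_G h (2*n) 0 (by norm_num) (by positivity)
  -- evaluate G h (2n) 0
  have hGf : G h (2*n) 0 = ∑ k ∈ Finset.Icc (-((2*n:ℕ):ℤ)-1) (((2*n:ℕ):ℤ)+1), f k := by
    unfold G
    apply Finset.sum_congr rfl
    intro k _
    unfold gterm
    rw [show 2*k*((h:ℤ)+2) - 0 = 2*((n:ℤ) + k*m) - ((2*n:ℕ):ℤ) by rw [hm]; push_cast; ring,
      show 2*k*((h:ℤ)+2) - 2 - 0 = 2*((n:ℤ) + k*m - 1) - ((2*n:ℕ):ℤ) by rw [hm]; push_cast; ring,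
      freeCt_eq_intChoose, freeCt_eq_intChoose]
  -- symmetry : f k + f (-k) = - g k
  have hfg : ∀ k : ℤ, f k + f (-k) = - g k := by
    intro k
    have e1 : intChoose (2*n) ((n:ℤ) + k*m) = intChoose (2*n) ((n:ℤ) - k*m) := by
      rw [intChoose_symm (2*n) ((n:ℤ) + k*m)]
      congr 1
      push_cast; ring
    have e2 : intChoose (2*n) ((n:ℤ) + k*m - 1) = intChoose (2*n) ((n:ℤ) - k*m + 1) := by
      rw [intChoose_symm (2*n) ((n:ℤ) + k*m - 1)]
      congr 1
      push_cast; ring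
    have e3 : (n:ℤ) + (-k)*m = (n:ℤ) - k*m := by ring
    have e4 : (n:ℤ) + (-k)*m - 1 = (n:ℤ) - k*m - 1 := by ring
    simp only [hf, hg, e3, e4, e1, e2]
    ring
  -- split the symmetric sum
  set K : ℤ := 2*(n:ℤ)+1 with hK
  have hsplit : ∑ k ∈ Finset.Icc (-((2*n:ℕ):ℤ)-1) (((2*n:ℕ):ℤ)+1), f k
      = f 0 + ∑ k ∈ Finset.Icc 1 K, (f k + f (-k)) := by
    have hIcc : Finset.Icc (-((2*n:ℕ):ℤ)-1) (((2*n:ℕ):ℤ)+1) = Finset.Icc (-K) K := by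
      congr 1 <;> (rw [hK]; push_cast; ring)
    rw [hIcc, Icc_split f (show -K ≤ (-1:ℤ) by omega) (by omega),
      show (-1:ℤ)+1 = 0 by ring, Icc_split f (show (0:ℤ) ≤ 0 by omega) (by omega),
      show (0:ℤ)+1 = 1 by ring]
    rw [Finset.Icc_self, Finset.sum_singleton]
    rw [← sum_Icc_neg 1 K f]
    rw [Finset.sum_add_distrib]
    ring
  -- evaluate the tsum
  have hTsum : (∑' k : ℕ, (intChoose (2 * n) ((n : ℤ) - (k + 1) * (h + 2) - 1)
              - 2 * intChoose (2 * n) ((n : ℤ) - (k + 1) * (h + 2))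
              + intChoose (2 * n) ((n : ℤ) - (k + 1) * (h + 2) + 1)))
      = ∑ k ∈ Finset.Icc (1:ℤ) K, g k := by
    rw [tsum_eq_sum (s := Finset.range (2*n+1)) ?_]
    · refine Finset.sum_nbij' (fun k : ℕ => (k:ℤ)+1) (fun z : ℤ => (z-1).toNat) ?_ ?_ ?_ ?_ ?_
      · intro a ha
        simp only [Finset.mem_range] at ha
        simp only [Finset.mem_Icc, hK]
        omega
      · intro a ha
        simp only [Finset.mem_Icc, hK] at ha
        simp only [Finset.mem_range]
        omega
      · intro a _; omega
      · intro a ha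
        simp only [Finset.mem_Icc] at ha
        omega
      · intro a _
        simp only [hg, hm]
    · intro k hk
      simp only [Finset.mem_range, not_lt] at hk
      have h1 : (2*(n:ℤ)+2) ≤ (k:ℤ)+1 := by push_cast; omega
      have h2 : (2:ℤ) ≤ (h:ℤ)+2 := by omega
      have hb : (2*(n:ℤ)+2) * 2 ≤ ((k:ℤ)+1) * ((h:ℤ)+2) :=
        mul_le_mul h1 h2 (by norm_num) (by positivity)
      rw [intChoose_neg _ (by linarith), intChoose_neg _ (by linarith),
        intChoose_neg _ (by linarith)]
      ring
  rw [hTsum]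
  have hconn : ((Finset.univ.filter (fun s : Fin (2 * n) → Bool =>
        pathHt s (2 * n) = 0 ∧
        ∀ i ≤ 2 * n, 0 ≤ pathHt s i ∧ pathHt s i ≤ (h : ℤ))).card : ℤ)
      = G h (2*n) 0 := hstrip
  rw [hconn, hGf, hsplit, catalan_part n]
  rw [Finset.sum_congr rfl (fun k _ => hfg k), Finset.sum_neg_distrib]
  have hf0 : f 0 = intChoose (2*n) (n:ℤ) - intChoose (2*n) ((n:ℤ)-1) := by
    simp only [hf]
    norm_num
  rw [hf0]
  ring
end

section
/- For Re(s) > 1, ∫_0^1 u^{s-1}(θ(u)² - 1) du = -1/s + 1/(s-1) + ∫_1^∞ t^{-s}(θ(t)² - 1) dt, where θ(u) = Σ_{n∈Z} e^{-πn²u}; consequently π^{-s}Γ(s)·Σ_{(k,l)≠(0,0)}(k²+l²)^{-s} = -1/s + 1/(s-1) + ∫_1^∞ (t^{-s} + t^{s-1})(θ(t)² - 1) dt. -/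
open Complex MeasureTheory

/-- Jacobi theta function `θ(u) = Σ_{n∈ℤ} e^{-πn²u}` for real `u`. -/
noncomputable def theta (u : ℝ) : ℝ :=
  ∑' n : ℤ, Real.exp (-Real.pi * (n : ℝ) ^ 2 * u)

lemma theta_eq {t : ℝ} (ht : 0 < t) : theta t = HurwitzZeta.evenKernel (↑(0:ℝ)) t := by
  have h := HurwitzZeta.hasSum_int_evenKernel 0 ht
  simp only [add_zero] at h
  rw [theta, h.tsum_eq]

lemma hasSum_theta {t : ℝ} (ht : 0 < t) :
    HasSum (fun n : ℤ ↦ Real.exp (-Real.pi * (n : ℝ) ^ 2 * t)) (theta t) := by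
  have h := HurwitzZeta.hasSum_int_evenKernel 0 ht
  simp only [add_zero] at h
  rw [theta_eq ht]
  exact h

lemma theta_inv {t : ℝ} (ht : 0 < t) : theta t⁻¹ = t ^ (1/2 : ℝ) * theta t := by
  have h := HurwitzZeta.evenKernel_functional_equation (↑(0:ℝ)) t⁻¹
  rw [← theta_eq (inv_pos.mpr ht), QuotientAddGroup.mk_zero,
    ← HurwitzZeta.evenKernel_eq_cosKernel_of_zero] at h
  simp only [one_div, inv_inv, ← QuotientAddGroup.mk_zero] at h
  rw [← theta_eq ht] at h
  rw [h, Real.inv_rpow ht.le, inv_inv]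
  norm_num

lemma theta_inv_sq {t : ℝ} (ht : 0 < t) : theta t⁻¹ ^ 2 = t * theta t ^ 2 := by
  rw [theta_inv ht, mul_pow, ← Real.rpow_natCast (t ^ (1/2:ℝ)) 2, ← Real.rpow_mul ht.le]
  norm_num

/-- HasSum of theta squared minus 1 over ℤ×ℤ, complex-valued. -/
lemma hasSum_theta_sq_sub_one {t : ℝ} (ht : 0 < t) :
    HasSum (fun p : ℤ × ℤ ↦ if ((p.1:ℝ)^2 + (p.2:ℝ)^2) = 0 then 0 else
      (1:ℂ) * Real.exp (-Real.pi * ((p.1:ℝ)^2 + (p.2:ℝ)^2) * t))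
      ((theta t : ℂ)^2 - 1) := by
  classical
  have hθ := hasSum_theta ht
  have hsum : Summable (fun p : ℤ × ℤ ↦
      Real.exp (-Real.pi * (p.1:ℝ)^2 * t) * Real.exp (-Real.pi * (p.2:ℝ)^2 * t)) :=
    hθ.summable.mul_of_nonneg hθ.summable (fun _ ↦ (Real.exp_pos _).le)
      (fun _ ↦ (Real.exp_pos _).le)
  have hprod : HasSum (fun p : ℤ × ℤ ↦
      Real.exp (-Real.pi * (p.1:ℝ)^2 * t) * Real.exp (-Real.pi * (p.2:ℝ)^2 * t))
      (theta t * theta t) := by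
    have h := hθ.mul_eq hθ hsum.hasSum
    exact h ▸ hsum.hasSum
  have hprod' : HasSum (fun p : ℤ × ℤ ↦
      Real.exp (-Real.pi * ((p.1:ℝ)^2 + (p.2:ℝ)^2) * t)) (theta t * theta t) := by
    refine hprod.congr_fun fun p ↦ ?_
    rw [← Real.exp_add]; ring_nf
  have hupd := hprod'.update (0, 0) 0
  have h0 : Real.exp (-Real.pi * (((0:ℤ):ℝ)^2 + ((0:ℤ):ℝ)^2) * t) = 1 := by norm_num
  have heq : (fun p : ℤ × ℤ ↦ if ((p.1:ℝ)^2 + (p.2:ℝ)^2) = 0 then 0 else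
      Real.exp (-Real.pi * ((p.1:ℝ)^2 + (p.2:ℝ)^2) * t)) =
      Function.update (fun p : ℤ × ℤ ↦
        Real.exp (-Real.pi * ((p.1:ℝ)^2 + (p.2:ℝ)^2) * t)) (0, 0) 0 := by
    funext p
    rw [Function.update_apply]
    have hiff : ((p.1:ℝ)^2 + (p.2:ℝ)^2 = 0) ↔ p = (0, 0) := by
      rw [add_eq_zero_iff_of_nonneg (sq_nonneg _) (sq_nonneg _)]
      simp [pow_eq_zero_iff, Prod.ext_iff]
    by_cases hp : p = (0, 0)
    · simp [hp]
    · rw [if_neg hp, if_neg (fun h ↦ hp (hiff.mp h))]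
  have hreal : HasSum (fun p : ℤ × ℤ ↦ if ((p.1:ℝ)^2 + (p.2:ℝ)^2) = 0 then 0 else
      Real.exp (-Real.pi * ((p.1:ℝ)^2 + (p.2:ℝ)^2) * t)) (theta t ^ 2 - 1) := by
    rw [heq]
    convert hupd using 1
    · rfl
    · rw [h0]; ring
  have := Complex.hasSum_ofReal.mpr hreal
  simp only [Complex.ofReal_sub, Complex.ofReal_one, Complex.ofReal_pow, apply_ite,
    Complex.ofReal_zero, one_mul] at this ⊢
  exact this

lemma epstein_summable {σ : ℝ} (hσ : 1 < σ) :
    Summable (fun p : ℤ × ℤ ↦ 1 / ((p.1:ℝ)^2 + (p.2:ℝ)^2) ^ σ) := by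
  have h2σ : (2:ℝ) < 2 * σ := by linarith
  have hs := EisensteinSeries.summable_one_div_norm_rpow h2σ
  have hs' : Summable (fun p : ℤ × ℤ ↦ ‖(finTwoArrowEquiv ℤ).symm p‖ ^ (-(2*σ))) :=
    ((finTwoArrowEquiv ℤ).symm.summable_iff).mpr hs
  have habs : ∀ q : ℤ, ((q.natAbs:ℝ))^2 = (q:ℝ)^2 := fun q ↦ by
    rw [Nat.cast_natAbs]
    push_cast
    rw [_root_.sq_abs]
  refine hs'.of_nonneg_of_le (fun p ↦ by positivity) (fun p ↦ ?_)
  set x := (finTwoArrowEquiv ℤ).symm p with hx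
  have hnorm : ‖x‖^2 ≤ (p.1:ℝ)^2 + (p.2:ℝ)^2 := by
    rw [EisensteinSeries.norm_eq_max_natAbs]
    have h1 : x 0 = p.1 := rfl
    have h2 : x 1 = p.2 := rfl
    rw [h1, h2, Nat.cast_max]
    rcases le_total ((p.1.natAbs : ℝ)) ((p.2.natAbs : ℝ)) with h | h
    · rw [max_eq_right h, habs]
      nlinarith [sq_nonneg ((p.1:ℝ))]
    · rw [max_eq_left h, habs]
      nlinarith [sq_nonneg ((p.2:ℝ))]
  rcases eq_or_ne (‖x‖) 0 with h0 | h0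
  · have hp0 : x = 0 := norm_eq_zero.mp h0
    have hp : p = 0 := by
      have h' := (finTwoArrowEquiv ℤ).apply_symm_apply p
      rw [← hx, hp0] at h'
      rw [← h']
      rfl
    rw [hp, h0, Real.zero_rpow (by linarith)]
    norm_num
    rw [Real.zero_rpow (by linarith)]
  · have hxpos : 0 < ‖x‖ := lt_of_le_of_ne (norm_nonneg x) (Ne.symm h0)
    have hNpos : 0 < (p.1:ℝ)^2 + (p.2:ℝ)^2 := lt_of_lt_of_le (by positivity) hnorm
    rw [Real.rpow_neg (norm_nonneg x), one_div, inv_le_inv₀ (by positivity)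
      (Real.rpow_pos_of_pos hxpos _)]
    calc ‖x‖ ^ (2*σ) = (‖x‖^2) ^ σ := by
          rw [← Real.rpow_natCast ‖x‖ 2, ← Real.rpow_mul (norm_nonneg x)]; norm_num
      _ ≤ ((p.1:ℝ)^2 + (p.2:ℝ)^2) ^ σ :=
          Real.rpow_le_rpow (by positivity) hnorm (by linarith)

lemma mellin_theta (s : ℂ) (hs : 1 < s.re) :
    (Real.pi : ℂ) ^ (-s) * Complex.Gamma s *
        (∑' p : ℤ × ℤ, if p ≠ 0 then ((p.1 ^ 2 + p.2 ^ 2 : ℤ) : ℂ) ^ (-s) else 0)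
      = ∫ t in Set.Ioi (0:ℝ), (t:ℂ) ^ (s-1) * ((theta t : ℂ)^2 - 1) := by
  have hs0 : s ≠ 0 := fun h ↦ by simp [h] at hs; linarith
  have key := hasSum_mellin_pi_mul₀ (a := fun _ : ℤ × ℤ ↦ (1:ℂ))
    (p := fun p : ℤ × ℤ ↦ (p.1:ℝ)^2 + (p.2:ℝ)^2)
    (F := fun t ↦ (theta t : ℂ)^2 - 1) (fun p ↦ by positivity) (by linarith : 0 < s.re)
    (fun t ht ↦ hasSum_theta_sq_sub_one ht)
    (by simpa [norm_one] using epstein_summable hs)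
  rw [← tsum_mul_left]
  have hterm : ∀ p : ℤ × ℤ,
      (Real.pi : ℂ) ^ (-s) * Complex.Gamma s *
        (if p ≠ 0 then ((p.1 ^ 2 + p.2 ^ 2 : ℤ) : ℂ) ^ (-s) else 0) =
      (Real.pi : ℂ) ^ (-s) * Complex.Gamma s * 1 / (((p.1:ℝ)^2 + (p.2:ℝ)^2 : ℝ) : ℂ) ^ s := by
    intro p
    by_cases hp : p = 0
    · simp only [hp, ne_eq, not_true_eq_false, if_false, mul_zero]
      norm_num
      rw [zero_cpow hs0, div_zero]
    · rw [if_pos hp, mul_one, div_eq_mul_inv]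
      congr 2
      push_cast
      rw [cpow_neg]
  rw [tsum_congr hterm, key.tsum_eq, mellin]
  exact setIntegral_congr_fun measurableSet_Ioi fun t _ ↦ by rw [smul_eq_mul]

open Asymptotics Filter in
lemma theta_sq_isBigO : ∃ p : ℝ, 0 < p ∧
    (fun t : ℝ ↦ (theta t : ℂ)^2 - 1) =O[atTop] (fun t ↦ Real.exp (-p * t)) := by
  obtain ⟨p, hp, hO⟩ := HurwitzZeta.isBigO_atTop_evenKernel_sub 0
  rw [if_pos rfl] at hO
  refine ⟨p, hp, ?_⟩
  have h1 : (fun t : ℝ ↦ theta t - 1) =O[atTop] (fun t ↦ Real.exp (-p * t)) := by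
    refine EventuallyEq.trans_isBigO ?_ hO
    filter_upwards [eventually_gt_atTop 0] with t ht
    rw [theta_eq ht, QuotientAddGroup.mk_zero]
  have hexp0 : Tendsto (fun t : ℝ ↦ Real.exp (-p * t)) atTop (nhds 0) :=
    Real.tendsto_exp_atBot.comp (tendsto_id.const_mul_atTop_of_neg (neg_neg_iff_pos.2 hp))
  have h2 : Tendsto (fun t : ℝ ↦ theta t - 1) atTop (nhds 0) := h1.trans_tendsto hexp0
  have h3 : (fun t : ℝ ↦ theta t + 1) =O[atTop] (fun _ ↦ (1:ℝ)) := by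
    have : Tendsto (fun t : ℝ ↦ theta t + 1) atTop (nhds (0 + 2)) := by
      have := h2.add (tendsto_const_nhds (x := (2:ℝ)))
      refine this.congr fun t ↦ by ring
    exact this.isBigO_one ℝ
  have h4 : (fun t : ℝ ↦ theta t ^ 2 - 1) =O[atTop] (fun t ↦ Real.exp (-p * t)) := by
    have := h1.mul h3
    refine IsBigO.congr' this (Eventually.of_forall fun t ↦ by ring) (Eventually.of_forall fun t ↦ mul_one _)
  have h5 := Complex.ofRealCLM.isBigO_comp (fun t : ℝ ↦ theta t ^ 2 - 1) atTop
  have h6 : (fun t : ℝ ↦ ((theta t ^ 2 - 1 : ℝ) : ℂ)) =O[atTop] (fun t ↦ Real.exp (-p * t)) :=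
    h5.trans h4
  exact h6.congr_left fun t ↦ by push_cast; ring

open Asymptotics Filter in
lemma integrable_cpow_mul_theta (c : ℂ) :
    IntegrableOn (fun t : ℝ ↦ (t:ℂ)^c * ((theta t : ℂ)^2 - 1)) (Set.Ioi (1:ℝ)) := by
  obtain ⟨p, hp, hO⟩ := theta_sq_isBigO
  have hcont : ContinuousOn (fun t : ℝ ↦ (t:ℂ)^c * ((theta t : ℂ)^2 - 1)) (Set.Ici 1) := by
    have hθ : ContinuousOn theta (Set.Ici (1:ℝ)) := by
      refine ContinuousOn.congr ((HurwitzZeta.continuousOn_evenKernel 0).mono ?_)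
        (fun t ht ↦ ?_)
      · exact fun t ht ↦ Set.mem_Ioi.mpr (lt_of_lt_of_le zero_lt_one ht)
      · rw [theta_eq (lt_of_lt_of_le zero_lt_one ht), QuotientAddGroup.mk_zero]
    have hθC : ContinuousOn (fun t : ℝ ↦ (theta t : ℂ)) (Set.Ici 1) :=
      Complex.continuous_ofReal.comp_continuousOn hθ
    refine ContinuousOn.mul (fun t ht ↦ ?_) ((hθC.pow 2).sub continuousOn_const)
    exact (Complex.continuousAt_ofReal_cpow_const t c
      (Or.inr (ne_of_gt (lt_of_lt_of_le zero_lt_one ht)))).continuousWithinAt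
  have hA : (fun t : ℝ ↦ (t:ℂ)^c) =O[atTop] (fun t ↦ t ^ c.re) := by
    rw [isBigO_iff]
    refine ⟨1, ?_⟩
    filter_upwards [eventually_gt_atTop 0] with t ht
    rw [Complex.norm_cpow_eq_rpow_re_of_pos ht, one_mul,
      Real.norm_eq_abs, abs_of_pos (Real.rpow_pos_of_pos ht _)]
  have hprod := hA.mul hO
  have hhalf : (fun t : ℝ ↦ t ^ c.re * Real.exp (-p * t)) =O[atTop]
      (fun t ↦ Real.exp (-(p/2) * t)) := by
    have h0 : Tendsto (fun t : ℝ ↦ t ^ c.re * Real.exp (-(p/2) * t)) atTop (nhds 0) :=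
      tendsto_rpow_mul_exp_neg_mul_atTop_nhds_zero c.re (p/2) (by positivity)
    have := (h0.isBigO_one ℝ).mul (isBigO_refl (fun t : ℝ ↦ Real.exp (-(p/2) * t)) atTop)
    exact this.congr (fun t ↦ by rw [mul_assoc, ← Real.exp_add]; ring_nf) fun t ↦ one_mul _
  have hfinal := (hprod.trans hhalf)
  exact Iff.mp integrableOn_Ici_iff_integrableOn_Ioi
    ((hcont.locallyIntegrableOn measurableSet_Ici).integrableOn_of_isBigO_atTop hfinal
      ⟨Set.Ioi 1, Ioi_mem_atTop 1, exp_neg_integrableOn_Ioi 1 (by positivity)⟩)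

lemma inv_image_Ioi : (fun t : ℝ ↦ t⁻¹) '' Set.Ioi 1 = Set.Ioo 0 1 := by
  ext x
  simp only [Set.mem_image, Set.mem_Ioi, Set.mem_Ioo]
  constructor
  · rintro ⟨t, ht, rfl⟩
    exact ⟨inv_pos.mpr (lt_trans zero_lt_one ht), inv_lt_one_of_one_lt₀ ht⟩
  · rintro ⟨hx0, hx1⟩
    exact ⟨x⁻¹, (one_lt_inv₀ hx0).mpr hx1, inv_inv x⟩

lemma inv_integrand (s : ℂ) : ∀ t ∈ Set.Ioi (1:ℝ),
    |(-(t^2)⁻¹)| • (((t⁻¹ : ℝ):ℂ)^(s-1) * ((theta t⁻¹ : ℂ)^2 - 1)) =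
    (t:ℂ)^(-s) * ((theta t : ℂ)^2 - 1) + ((t:ℂ)^(-s) - (t:ℂ)^(-s-1)) := by
  intro t ht
  have ht0 : (0:ℝ) < t := lt_trans zero_lt_one ht
  have hT : (t:ℂ) ≠ 0 := Complex.ofReal_ne_zero.mpr ht0.ne'
  have hθ : ((theta t⁻¹ : ℝ):ℂ)^2 = (t:ℂ) * ((theta t : ℂ))^2 := by
    exact_mod_cast congrArg Complex.ofReal (theta_inv_sq ht0)
  have harg : Complex.arg (t:ℂ) ≠ Real.pi := by
    rw [Complex.arg_ofReal_of_nonneg ht0.le]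
    exact Ne.symm Real.pi_ne_zero
  have hA : (t:ℂ)^s ≠ 0 := by
    rw [Ne, Complex.cpow_eq_zero_iff, not_and_or]
    exact Or.inl hT
  have habs : |(-(t^2)⁻¹)| = (t^2)⁻¹ := by
    rw [abs_neg, abs_inv, abs_of_pos (by positivity)]
  rw [habs, Complex.real_smul, Complex.ofReal_inv, Complex.ofReal_inv, Complex.ofReal_pow, hθ,
    inv_cpow _ _ harg, Complex.cpow_sub _ _ hT, Complex.cpow_one, Complex.cpow_neg,
    show -s - 1 = -(s+1) by ring, Complex.cpow_neg, Complex.cpow_add _ _ hT, Complex.cpow_one]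
  field_simp
  ring

lemma inv_hasDeriv : ∀ x ∈ Set.Ioi (1:ℝ),
    HasDerivWithinAt (fun t : ℝ ↦ t⁻¹) (-(x^2)⁻¹) (Set.Ioi 1) x :=
  fun x hx ↦ (hasDerivAt_inv (ne_of_gt (lt_trans zero_lt_one hx))).hasDerivWithinAt

lemma part_one (s : ℂ) (hs : 1 < s.re) :
    (∫ u in Set.Ioo (0:ℝ) 1, (u:ℂ)^(s-1) * ((theta u : ℂ)^2 - 1))
      = -1/s + 1/(s-1) + ∫ t in Set.Ioi (1:ℝ), (t:ℂ)^(-s) * ((theta t : ℂ)^2 - 1) := by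
  have hs0 : s ≠ 0 := fun h ↦ by simp [h] at hs; linarith
  have hs1 : s ≠ 1 := fun h ↦ by simp [h] at hs
  have hCoV := integral_image_eq_integral_abs_deriv_smul measurableSet_Ioi inv_hasDeriv
    inv_injective.injOn
    (fun u : ℝ ↦ (u:ℂ)^(s-1) * ((theta u : ℂ)^2 - 1))
  rw [inv_image_Ioi] at hCoV
  rw [hCoV]
  rw [setIntegral_congr_fun measurableSet_Ioi (inv_integrand s)]
  have I1 := integrable_cpow_mul_theta (-s)
  have I3 : IntegrableOn (fun t : ℝ ↦ (t:ℂ)^(-s)) (Set.Ioi 1) :=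
    integrableOn_Ioi_cpow_of_lt (by simp; linarith) zero_lt_one
  have I4 : IntegrableOn (fun t : ℝ ↦ (t:ℂ)^(-s-1)) (Set.Ioi 1) :=
    integrableOn_Ioi_cpow_of_lt (by simp; linarith) zero_lt_one
  have I34 : IntegrableOn (fun t : ℝ ↦ (t:ℂ)^(-s) - (t:ℂ)^(-s-1)) (Set.Ioi 1) := I3.sub I4
  rw [integral_add I1 I34, integral_sub I3 I4,
    integral_Ioi_cpow_of_lt (by simp; linarith) zero_lt_one,
    integral_Ioi_cpow_of_lt (by simp; linarith) zero_lt_one]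
  have hss : s - 1 ≠ 0 := sub_ne_zero.mpr hs1
  have h1s : (1:ℂ) - s ≠ 0 := fun h ↦ hss (by rw [← neg_sub] at h; simpa using neg_eq_zero.mp h)
  have halg : -((1:ℝ):ℂ)^(-s+1)/(-s+1) - -((1:ℝ):ℂ)^(-s-1+1)/(-s-1+1) = -1/s + 1/(s-1) := by
    have hns : -s ≠ 0 := neg_ne_zero.mpr hs0
    have hns1 : -s + 1 ≠ 0 := by
      intro h
      exact h1s (by linear_combination h)
    rw [Complex.ofReal_one, Complex.one_cpow, Complex.one_cpow,
      show -s - 1 + 1 = -s by ring]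
    rw [div_sub_div _ _ hns1 hns, div_add_div _ _ hs0 hss, div_eq_div_iff (by
      exact mul_ne_zero hns1 hns) (mul_ne_zero hs0 hss)]
    ring
  rw [halg]
  ring

theorem epstein_functional_pieces (s : ℂ) (hs : 1 < s.re) :
    (∫ u in Set.Ioo (0 : ℝ) 1, (u : ℂ) ^ (s - 1) * ((theta u : ℂ) ^ 2 - 1))
        = -1 / s + 1 / (s - 1)
          + ∫ t in Set.Ioi (1 : ℝ), (t : ℂ) ^ (-s) * ((theta t : ℂ) ^ 2 - 1) ∧
    (Real.pi : ℂ) ^ (-s) * Complex.Gamma s *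
        (∑' p : ℤ × ℤ, if p ≠ 0 then ((p.1 ^ 2 + p.2 ^ 2 : ℤ) : ℂ) ^ (-s) else 0)
      = -1 / s + 1 / (s - 1)
        + ∫ t in Set.Ioi (1 : ℝ),
            ((t : ℂ) ^ (-s) + (t : ℂ) ^ (s - 1)) * ((theta t : ℂ) ^ 2 - 1) := by
  constructor
  · exact part_one s hs
  · rw [mellin_theta s hs]
    have hIoo : IntegrableOn (fun u : ℝ ↦ (u:ℂ)^(s-1) * ((theta u : ℂ)^2 - 1))
        (Set.Ioo 0 1) := by
      rw [← inv_image_Ioi,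
        integrableOn_image_iff_integrableOn_abs_deriv_smul measurableSet_Ioi inv_hasDeriv
          inv_injective.injOn]
      have I1 := integrable_cpow_mul_theta (-s)
      have I3 : IntegrableOn (fun t : ℝ ↦ (t:ℂ)^(-s)) (Set.Ioi 1) :=
        integrableOn_Ioi_cpow_of_lt (by simp; linarith) zero_lt_one
      have I4 : IntegrableOn (fun t : ℝ ↦ (t:ℂ)^(-s-1)) (Set.Ioi 1) :=
        integrableOn_Ioi_cpow_of_lt (by simp; linarith) zero_lt_one
      have Isum : IntegrableOn (fun t : ℝ ↦
          (t:ℂ)^(-s) * ((theta t : ℂ)^2 - 1) + ((t:ℂ)^(-s) - (t:ℂ)^(-s-1)))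
          (Set.Ioi 1) := I1.add (I3.sub I4)
      exact Isum.congr_fun (fun t ht ↦ (inv_integrand s t ht).symm) measurableSet_Ioi
    have hIci : IntegrableOn (fun u : ℝ ↦ (u:ℂ)^(s-1) * ((theta u : ℂ)^2 - 1))
        (Set.Ici 1) :=
      Iff.mpr integrableOn_Ici_iff_integrableOn_Ioi (integrable_cpow_mul_theta (s-1))
    rw [← Set.Ioo_union_Ici_eq_Ioi (zero_lt_one : (0:ℝ) < 1),
      setIntegral_union ((Set.Iio_disjoint_Ici le_rfl).mono_left Set.Ioo_subset_Iio_self) measurableSet_Ici hIoo hIci,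
      integral_Ici_eq_integral_Ioi, part_one s hs]
    have hadd : (∫ t in Set.Ioi (1:ℝ),
        ((t : ℂ) ^ (-s) + (t : ℂ) ^ (s - 1)) * ((theta t : ℂ) ^ 2 - 1)) =
        (∫ t in Set.Ioi (1:ℝ), (t:ℂ)^(-s) * ((theta t : ℂ)^2 - 1)) +
        (∫ t in Set.Ioi (1:ℝ), (t:ℂ)^(s-1) * ((theta t : ℂ)^2 - 1)) := by
      rw [← integral_add (integrable_cpow_mul_theta (-s)) (integrable_cpow_mul_theta (s-1))]
      exact setIntegral_congr_fun measurableSet_Ioi fun t _ ↦ by ring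
    rw [hadd]
    ring
end
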